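/- Let N ≥ 1, ρ ≥ 1 and let a, b : V → ℕ be super-tile capacity data on the N×N grid V. Let S' ⊆ V. If C is a connected component of S' (with respect to grid adjacency restricted to S') whose bounding rectangle is not all of V, then cap(S' \ C) ≤ cap(S'). Likewise, if C is a connected component of V \ S' whose bounding rectangle is not all of V, then cap(S' ∪ C) ≤ cap(S'). -/

import Mathlib

/-- The vertices of the `N × N` grid `{0,…,N−1}²`. -/
abbrev GridV (N : ℕ) : Type := Fin N × Fin N

/-- Grid adjacency: two vertices are adjacent when they differ by exactly `1` in exactly one
coordinate. -/
def Adj {N : ℕ} (u w : GridV N) : Prop :=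
  (u.1 = w.1 ∧ ((u.2 : ℕ) + 1 = (w.2 : ℕ) ∨ (w.2 : ℕ) + 1 = (u.2 : ℕ))) ∨
  (u.2 = w.2 ∧ ((u.1 : ℕ) + 1 = (w.1 : ℕ) ∨ (w.1 : ℕ) + 1 = (u.1 : ℕ)))

instance {N : ℕ} (u w : GridV N) : Decidable (Adj u w) := by unfold Adj; infer_instance

/-- Membership in the `c × c` square subgrid with bottom-left corner `(x0, y0)`. -/
def inSquare {N : ℕ} (x0 y0 c : ℕ) (v : GridV N) : Prop :=
  x0 ≤ (v.1 : ℕ) ∧ (v.1 : ℕ) < x0 + c ∧ y0 ≤ (v.2 : ℕ) ∧ (v.2 : ℕ) < y0 + c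

instance {N : ℕ} (x0 y0 c : ℕ) (v : GridV N) : Decidable (inSquare x0 y0 c v) := by
  unfold inSquare; infer_instance

/-- Super-tile capacity data on the `N × N` grid: functions `a b : V → ℕ` with equal totals
such that the sum of `a` (resp. `b`) over every `c × c` square subgrid is at most `ρ·c`.
(This encodes the flow graph of a super-tile: a source `s` with an arc of capacity `a v` into
each grid vertex `v`, arcs of capacity `ρ` in both directions between adjacent grid vertices,
and `b v` parallel unit-capacity arcs from each grid vertex `v` to a sink `p`.) -/
structure CapacityData (N ρ : ℕ) where
  a : GridV N → ℕ
  b : GridV N → ℕ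
  total_eq : ∑ v, a v = ∑ v, b v
  a_square : ∀ c x0 y0 : ℕ, 1 ≤ c → x0 + c ≤ N → y0 + c ≤ N →
    ∑ v ∈ Finset.univ.filter (inSquare x0 y0 c), a v ≤ ρ * c
  b_square : ∀ c x0 y0 : ℕ, 1 ≤ c → x0 + c ≤ N → y0 + c ≤ N →
    ∑ v ∈ Finset.univ.filter (inSquare x0 y0 c), b v ≤ ρ * c

/-- The total value `F = Σ_v a v (= Σ_v b v)` of capacity data. -/
def CapacityData.F {N ρ : ℕ} (d : CapacityData N ρ) : ℕ := ∑ v, d.a v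

/-- The capacity of the s–p cut determined by `S' ⊆ V`:
`cap S' = Σ_{v ∉ S'} a v + Σ_{v ∈ S'} b v + ρ·#{(u,w) : u ∈ S', w ∉ S', u adjacent to w}`. -/
def cutCap {N ρ : ℕ} (d : CapacityData N ρ) (S' : Finset (GridV N)) : ℕ :=
  (∑ v ∈ S'ᶜ, d.a v) + (∑ v ∈ S', d.b v) +
    ρ * (Finset.univ.filter fun p : GridV N × GridV N =>
      p.1 ∈ S' ∧ p.2 ∉ S' ∧ Adj p.1 p.2).card

/-- `C` is a connected component of `X` (with respect to grid adjacency restricted to `X`):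
`C` is the set of vertices reachable from some `v ∈ X` by paths staying inside `X`. -/
def IsComponent {N : ℕ} (X C : Finset (GridV N)) : Prop :=
  ∃ v ∈ X, ∀ w : GridV N,
    w ∈ C ↔ Relation.ReflTransGen (fun p q => p ∈ X ∧ q ∈ X ∧ Adj p q) v w

/-- The bounding rectangle of `C` is all of the grid: `C` touches all four sides. -/
def FullBoundingRect {N : ℕ} (C : Finset (GridV N)) : Prop :=
  (∃ v ∈ C, (v.1 : ℕ) = 0) ∧ (∃ v ∈ C, (v.1 : ℕ) = N - 1) ∧
  (∃ v ∈ C, (v.2 : ℕ) = 0) ∧ (∃ v ∈ C, (v.2 : ℕ) = N - 1)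

lemma adj_symm {N : ℕ} {u w : GridV N} (h : Adj u w) : Adj w u := by
  unfold Adj at *; tauto


def bdp {N : ℕ} (C : Finset (GridV N)) : Finset (GridV N × GridV N) :=
  Finset.univ.filter fun p => p.1 ∈ C ∧ p.2 ∉ C ∧ Adj p.1 p.2

/-- Per occupied column, a vertical boundary edge exists if some row is missed. -/
lemma col_bd {N : ℕ} {C : Finset (GridV N)} (hy : ∃ y : Fin N, ∀ v ∈ C, v.2 ≠ y) :
    C.image (fun v => (v.1 : ℕ)) ⊆ (bdp C).image (fun p => (p.1.1 : ℕ)) := by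
  obtain ⟨y, hyC⟩ := hy
  intro x hx
  obtain ⟨v, hv, rfl⟩ := Finset.mem_image.1 hx
  have hcolne : (C.filter (fun u => u.1 = v.1)).Nonempty :=
    ⟨v, Finset.mem_filter.2 ⟨hv, rfl⟩⟩
  obtain ⟨m, hm, hmin⟩ := Finset.exists_min_image _
    (fun u : GridV N => ((y : ℕ) - (u.2 : ℕ)) + ((u.2 : ℕ) - (y : ℕ))) hcolne
  obtain ⟨hmC, hmcol⟩ := Finset.mem_filter.1 hm
  have hmy : (m.2 : ℕ) ≠ (y : ℕ) := fun h => hyC m hmC (Fin.val_injective h)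
  rcases lt_or_gt_of_ne hmy with hlt | hgt
  · -- neighbor above
    have hub : (m.2 : ℕ) + 1 < N := lt_of_le_of_lt hlt y.isLt
    set u : GridV N := (m.1, ⟨(m.2 : ℕ) + 1, hub⟩) with hu
    have hadj : Adj m u := Or.inl ⟨rfl, Or.inl rfl⟩
    have hunotC : u ∉ C := by
      intro huC
      have := hmin u (Finset.mem_filter.2 ⟨huC, hmcol⟩)
      simp only [hu] at this
      omega
    refine Finset.mem_image.2 ⟨(m, u), ?_, hmcol ▸ rfl⟩
    exact Finset.mem_filter.2 ⟨Finset.mem_univ _, hmC, hunotC, hadj⟩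
  · -- neighbor below
    have h1 : (m.2 : ℕ) - 1 < N := by have := m.2.isLt; omega
    set u : GridV N := (m.1, ⟨(m.2 : ℕ) - 1, h1⟩) with hu
    have hadj : Adj m u := Or.inl ⟨rfl, Or.inr (by simp [hu]; omega)⟩
    have hunotC : u ∉ C := by
      intro huC
      have := hmin u (Finset.mem_filter.2 ⟨huC, hmcol⟩)
      simp only [hu] at this
      omega
    refine Finset.mem_image.2 ⟨(m, u), ?_, hmcol ▸ rfl⟩
    exact Finset.mem_filter.2 ⟨Finset.mem_univ _, hmC, hunotC, hadj⟩

lemma adj_fst_close {N : ℕ} {u w : GridV N} (h : Adj u w) :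
    (w.1 : ℕ) ≤ (u.1 : ℕ) + 1 := by
  unfold Adj at h
  rcases h with ⟨h1, -⟩ | ⟨-, h2⟩
  · rw [h1]; omega
  · omega

/-- Intermediate column coverage along a connected set. -/
lemma cover {N : ℕ} {C : Finset (GridV N)}
    (hconn : ∀ u ∈ C, ∀ w ∈ C,
      Relation.ReflTransGen (fun p q => p ∈ C ∧ q ∈ C ∧ Adj p q) u w)
    {u w : GridV N} (hu : u ∈ C) (hw : w ∈ C) {x : ℕ}
    (h1 : (u.1 : ℕ) ≤ x) (h2 : x ≤ (w.1 : ℕ)) : ∃ z ∈ C, (z.1 : ℕ) = x := by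
  by_contra hno
  push_neg at hno
  have hinv : ∀ q, Relation.ReflTransGen (fun p q => p ∈ C ∧ q ∈ C ∧ Adj p q) u q →
      (q.1 : ℕ) < x := by
    intro q hq
    induction hq with
    | refl => exact lt_of_le_of_ne h1 (hno u hu)
    | @tail p q hp step ih =>
        have hq1 : (q.1 : ℕ) ≤ (p.1 : ℕ) + 1 := adj_fst_close step.2.2
        have := hno q step.2.1
        omega
  have := hinv w (hconn u hu w hw)
  omega

def tr {N : ℕ} (v : GridV N) : GridV N := (v.2, v.1)

lemma adj_tr {N : ℕ} {u w : GridV N} (h : Adj u w) : Adj (tr u) (tr w) := by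
  unfold Adj tr at *; tauto

lemma mem_tr {N : ℕ} {C : Finset (GridV N)} {v : GridV N} :
    v ∈ C.image tr ↔ tr v ∈ C := by
  simp only [Finset.mem_image]
  constructor
  · rintro ⟨a, ha, rfl⟩; simpa [tr] using ha
  · intro h; exact ⟨tr v, h, rfl⟩

lemma bdp_tr_card {N : ℕ} (C : Finset (GridV N)) :
    (bdp (C.image tr)).card = (bdp C).card := by
  apply Finset.card_nbij' (i := fun p => (tr p.1, tr p.2)) (j := fun p => (tr p.1, tr p.2))
  · intro p hp
    simp only [Finset.mem_coe, bdp, Finset.mem_filter, Finset.mem_univ, true_and, mem_tr] at hp ⊢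
    exact ⟨hp.1, hp.2.1, adj_tr hp.2.2⟩
  · intro p hp
    simp only [Finset.mem_coe, bdp, Finset.mem_filter, Finset.mem_univ, true_and, mem_tr, tr,
      Prod.mk.eta] at hp ⊢
    exact ⟨hp.1, hp.2.1, adj_tr hp.2.2⟩
  · intro p hp; simp [tr]
  · intro p hp; simp [tr]

lemma conn_tr {N : ℕ} {C : Finset (GridV N)}
    (hconn : ∀ u ∈ C, ∀ w ∈ C,
      Relation.ReflTransGen (fun p q => p ∈ C ∧ q ∈ C ∧ Adj p q) u w) :
    ∀ u ∈ C.image tr, ∀ w ∈ C.image tr,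
      Relation.ReflTransGen
        (fun p q => p ∈ C.image tr ∧ q ∈ C.image tr ∧ Adj p q) u w := by
  intro u hu w hw
  have h := hconn (tr u) (mem_tr.1 hu) (tr w) (mem_tr.1 hw)
  exact Relation.ReflTransGen.lift
    (p := fun p q => p ∈ C.image tr ∧ q ∈ C.image tr ∧ Adj p q) tr
    (fun a b hab => ⟨mem_tr.2 (by simpa [tr] using hab.1),
      mem_tr.2 (by simpa [tr] using hab.2.1), adj_tr hab.2.2⟩) _ _ h

open Finset in
lemma wbound {N : ℕ} {C : Finset (GridV N)} (hne : C.Nonempty)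
    (hconn : ∀ u ∈ C, ∀ w ∈ C,
      Relation.ReflTransGen (fun p q => p ∈ C ∧ q ∈ C ∧ Adj p q) u w)
    (hy : ∃ y : Fin N, ∀ v ∈ C, v.2 ≠ y)
    {x0 x1 : ℕ} (h0 : ∃ u ∈ C, (u.1 : ℕ) = x0) (h1 : ∃ u ∈ C, (u.1 : ℕ) = x1)
    (hle : ∀ v ∈ C, x0 ≤ (v.1 : ℕ) ∧ (v.1 : ℕ) ≤ x1) :
    x1 - x0 + 1 ≤ (bdp C).card := by
  obtain ⟨u, hu, hux⟩ := h0
  obtain ⟨w, hw, hwx⟩ := h1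
  have hsub : Finset.Icc x0 x1 ⊆ C.image (fun v => (v.1 : ℕ)) := by
    intro x hx
    rw [Finset.mem_Icc] at hx
    obtain ⟨z, hz, hzx⟩ := cover hconn hu hw (x := x) (by omega) (by omega)
    exact Finset.mem_image.2 ⟨z, hz, hzx⟩
  have h2 := Finset.card_le_card (hsub.trans (col_bd hy))
  have h3 := Finset.card_image_le (s := bdp C) (f := fun p => (p.1.1 : ℕ))
  have hx01 : x0 ≤ x1 := by have := hle u hu; omega
  rw [Nat.card_Icc] at h2
  omega

open Finset in
lemma hbound {N : ℕ} {C : Finset (GridV N)} (hne : C.Nonempty)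
    (hconn : ∀ u ∈ C, ∀ w ∈ C,
      Relation.ReflTransGen (fun p q => p ∈ C ∧ q ∈ C ∧ Adj p q) u w)
    (hx : ∃ x : Fin N, ∀ v ∈ C, v.1 ≠ x)
    {y0 y1 : ℕ} (h0 : ∃ u ∈ C, (u.2 : ℕ) = y0) (h1 : ∃ u ∈ C, (u.2 : ℕ) = y1)
    (hle : ∀ v ∈ C, y0 ≤ (v.2 : ℕ) ∧ (v.2 : ℕ) ≤ y1) :
    y1 - y0 + 1 ≤ (bdp C).card := by
  rw [← bdp_tr_card C]
  apply wbound (C := C.image tr)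
  · exact hne.image tr
  · exact conn_tr hconn
  · obtain ⟨x, hxC⟩ := hx
    exact ⟨x, fun v hv => hxC (tr v) (mem_tr.1 hv)⟩
  · obtain ⟨u, hu, he⟩ := h0
    exact ⟨tr u, Finset.mem_image_of_mem tr hu, he⟩
  · obtain ⟨u, hu, he⟩ := h1
    exact ⟨tr u, Finset.mem_image_of_mem tr hu, he⟩
  · intro v hv
    exact hle (tr v) (mem_tr.1 hv)


lemma key_sum_le {N ρ : ℕ} (hN : 1 ≤ N) (f : GridV N → ℕ)
    (hf : ∀ c x0 y0 : ℕ, 1 ≤ c → x0 + c ≤ N → y0 + c ≤ N →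
      ∑ v ∈ Finset.univ.filter (inSquare x0 y0 c), f v ≤ ρ * c)
    (C : Finset (GridV N))
    (hconn : ∀ u ∈ C, ∀ w ∈ C,
      Relation.ReflTransGen (fun p q => p ∈ C ∧ q ∈ C ∧ Adj p q) u w)
    (hnf : ¬ FullBoundingRect C) :
    ∑ v ∈ C, f v ≤ ρ * (bdp C).card := by
  rcases C.eq_empty_or_nonempty with rfl | hne
  · simp
  obtain ⟨ux0, hux0, hminx⟩ := C.exists_min_image (fun v => (v.1 : ℕ)) hne
  obtain ⟨ux1, hux1, hmaxx⟩ := C.exists_max_image (fun v => (v.1 : ℕ)) hne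
  obtain ⟨uy0, huy0, hminy⟩ := C.exists_min_image (fun v => (v.2 : ℕ)) hne
  obtain ⟨uy1, huy1, hmaxy⟩ := C.exists_max_image (fun v => (v.2 : ℕ)) hne
  set x0 : ℕ := (ux0.1 : ℕ) with hx0
  set x1 : ℕ := (ux1.1 : ℕ) with hx1
  set y0 : ℕ := (uy0.2 : ℕ) with hy0
  set y1 : ℕ := (uy1.2 : ℕ) with hy1
  have hx1N : x1 < N := ux1.1.isLt
  have hy1N : y1 < N := uy1.2.isLt
  have hx01 : x0 ≤ x1 := hminx ux1 hux1
  have hy01 : y0 ≤ y1 := hminy uy1 huy1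
  set c : ℕ := max (x1 - x0 + 1) (y1 - y0 + 1) with hc
  set a0 : ℕ := min x0 (N - c) with ha0
  set b0 : ℕ := min y0 (N - c) with hb0
  -- the square sum bound
  have hsum : ∑ v ∈ C, f v ≤ ρ * c := by
    refine le_trans (Finset.sum_le_sum_of_subset ?_) (hf c a0 b0 (by omega) (by omega) (by omega))
    intro v hv
    have h1 := hminx v hv
    have h2 := hmaxx v hv
    have h3 := hminy v hv
    have h4 := hmaxy v hv
    have h5 : (v.1 : ℕ) < N := v.1.isLt
    have h6 : (v.2 : ℕ) < N := v.2.isLt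
    exact Finset.mem_filter.2 ⟨Finset.mem_univ _, by omega, by omega, by omega, by omega⟩
  -- missed-side disjunction
  have hmiss : (∀ v ∈ C, (v.1 : ℕ) ≠ 0) ∨ (∀ v ∈ C, (v.1 : ℕ) ≠ N - 1) ∨
      (∀ v ∈ C, (v.2 : ℕ) ≠ 0) ∨ (∀ v ∈ C, (v.2 : ℕ) ≠ N - 1) := by
    by_contra h
    push_neg at h
    obtain ⟨h1, h2, h3, h4⟩ := h
    exact hnf ⟨h1, h2, h3, h4⟩
  have rowTobd : (∃ y : Fin N, ∀ v ∈ C, v.2 ≠ y) → x1 - x0 + 1 ≤ (bdp C).card :=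
    fun hy => wbound hne hconn hy ⟨ux0, hux0, rfl⟩ ⟨ux1, hux1, rfl⟩
      (fun v hv => ⟨hminx v hv, hmaxx v hv⟩)
  have colTobd : (∃ x : Fin N, ∀ v ∈ C, v.1 ≠ x) → y1 - y0 + 1 ≤ (bdp C).card :=
    fun hx => hbound hne hconn hx ⟨uy0, huy0, rfl⟩ ⟨uy1, huy1, rfl⟩
      (fun v hv => ⟨hminy v hv, hmaxy v hv⟩)
  have colOfNarrow : x1 - x0 + 1 < N → ∃ x : Fin N, ∀ v ∈ C, v.1 ≠ x := by
    intro hw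
    by_cases h0 : x0 = 0
    · refine ⟨⟨N - 1, by omega⟩, fun v hv hcon => ?_⟩
      have h2 := hmaxx v hv
      have : (v.1 : ℕ) = N - 1 := by rw [hcon]
      omega
    · refine ⟨⟨0, hN⟩, fun v hv hcon => ?_⟩
      have h1 := hminx v hv
      have : (v.1 : ℕ) = 0 := by rw [hcon]
      omega
  have rowOfShort : y1 - y0 + 1 < N → ∃ y : Fin N, ∀ v ∈ C, v.2 ≠ y := by
    intro hw
    by_cases h0 : y0 = 0
    · refine ⟨⟨N - 1, by omega⟩, fun v hv hcon => ?_⟩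
      have h2 := hmaxy v hv
      have : (v.2 : ℕ) = N - 1 := by rw [hcon]
      omega
    · refine ⟨⟨0, hN⟩, fun v hv hcon => ?_⟩
      have h1 := hminy v hv
      have : (v.2 : ℕ) = 0 := by rw [hcon]
      omega
  have hbd : c ≤ (bdp C).card := by
    have hcol : (∀ v ∈ C, (v.1 : ℕ) ≠ 0) ∨ (∀ v ∈ C, (v.1 : ℕ) ≠ N - 1) →
        ∃ x : Fin N, ∀ v ∈ C, v.1 ≠ x := by
      rintro (h | h)
      · exact ⟨⟨0, hN⟩, fun v hv hcon => h v hv (by rw [hcon])⟩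
      · exact ⟨⟨N - 1, by omega⟩, fun v hv hcon => h v hv (by rw [hcon])⟩
    have hrow : (∀ v ∈ C, (v.2 : ℕ) ≠ 0) ∨ (∀ v ∈ C, (v.2 : ℕ) ≠ N - 1) →
        ∃ y : Fin N, ∀ v ∈ C, v.2 ≠ y := by
      rintro (h | h)
      · exact ⟨⟨0, hN⟩, fun v hv hcon => h v hv (by rw [hcon])⟩
      · exact ⟨⟨N - 1, by omega⟩, fun v hv hcon => h v hv (by rw [hcon])⟩
    rcases hmiss with h | h | h | h
    · have hA := colTobd (hcol (Or.inl h))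
      have hB : x1 - x0 + 1 ≤ (bdp C).card ∨ x1 - x0 + 1 ≤ y1 - y0 + 1 := by
        by_cases hwh : x1 - x0 + 1 ≤ y1 - y0 + 1
        · exact Or.inr hwh
        · exact Or.inl (rowTobd (rowOfShort (by omega)))
      omega
    · have hA := colTobd (hcol (Or.inr h))
      have hB : x1 - x0 + 1 ≤ (bdp C).card ∨ x1 - x0 + 1 ≤ y1 - y0 + 1 := by
        by_cases hwh : x1 - x0 + 1 ≤ y1 - y0 + 1
        · exact Or.inr hwh
        · exact Or.inl (rowTobd (rowOfShort (by omega)))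
      omega
    · have hA := rowTobd (hrow (Or.inl h))
      have hB : y1 - y0 + 1 ≤ (bdp C).card ∨ y1 - y0 + 1 ≤ x1 - x0 + 1 := by
        by_cases hwh : y1 - y0 + 1 ≤ x1 - x0 + 1
        · exact Or.inr hwh
        · exact Or.inl (colTobd (colOfNarrow (by omega)))
      omega
    · have hA := rowTobd (hrow (Or.inr h))
      have hB : y1 - y0 + 1 ≤ (bdp C).card ∨ y1 - y0 + 1 ≤ x1 - x0 + 1 := by
        by_cases hwh : y1 - y0 + 1 ≤ x1 - x0 + 1
        · exact Or.inr hwh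
        · exact Or.inl (colTobd (colOfNarrow (by omega)))
      omega
  exact le_trans hsum (Nat.mul_le_mul_left ρ hbd)

lemma component_facts {N : ℕ} {X C : Finset (GridV N)} (h : IsComponent X C) :
    C.Nonempty ∧ C ⊆ X ∧ (∀ u ∈ C, ∀ w, w ∈ X → Adj u w → w ∈ C) ∧
    (∀ u ∈ C, ∀ w ∈ C,
      Relation.ReflTransGen (fun p q => p ∈ C ∧ q ∈ C ∧ Adj p q) u w) := by
  obtain ⟨v, hvX, hiff⟩ := h
  have hvC : v ∈ C := (hiff v).2 .refl
  have hsub : C ⊆ X := by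
    intro w hw
    have hr := (hiff w).1 hw
    rcases hr.cases_tail with rfl | ⟨c, -, hc⟩
    · exact hvX
    · exact hc.2.1
  have hclose : ∀ u ∈ C, ∀ w, w ∈ X → Adj u w → w ∈ C := by
    intro u hu w hwX hadj
    exact (hiff w).2 (((hiff u).1 hu).tail ⟨hsub hu, hwX, hadj⟩)
  have hlift : ∀ w, Relation.ReflTransGen (fun p q => p ∈ X ∧ q ∈ X ∧ Adj p q) v w →
      Relation.ReflTransGen (fun p q => p ∈ C ∧ q ∈ C ∧ Adj p q) v w := by
    intro w hw
    induction hw with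
    | refl => exact .refl
    | tail hp step ih =>
        exact ih.tail ⟨(hiff _).2 hp, (hiff _).2 (hp.tail step), step.2.2⟩
  refine ⟨⟨v, hvC⟩, hsub, hclose, ?_⟩
  intro u hu w hw
  have hsymm : Symmetric (fun p q : GridV N => p ∈ C ∧ q ∈ C ∧ Adj p q) := by
    intro p q ⟨h1, h2, h3⟩; exact ⟨h2, h1, adj_symm h3⟩
  haveI : Std.Symm (fun p q : GridV N => p ∈ C ∧ q ∈ C ∧ Adj p q) := ⟨fun a b h => hsymm h⟩
  exact (Std.Symm.symm _ _ (hlift u ((hiff u).1 hu))).trans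
    (hlift w ((hiff w).1 hw))


section MainProof

open Finset

private lemma arith1' (A Ca Bsd B T1 T2 Cb : ℕ) (h1 : Ca ≤ T1) (h2 : Bsd + Cb = B) :
    A + Ca + Bsd + T2 ≤ A + B + (T1 + T2) := by linarith

private lemma arith2' (A' Ca A B Cb T1 T2 : ℕ) (h1 : Cb ≤ T1) (h2 : A' + Ca = A) :
    A' + (B + Cb) + T2 ≤ A + B + (T1 + T2) := by linarith

private lemma cutCap_eq' {N ρ : ℕ} (d : CapacityData N ρ) (X : Finset (GridV N)) :
    cutCap d X = (∑ v ∈ Xᶜ, d.a v) + (∑ v ∈ X, d.b v) + ρ * (bdp X).card := rfl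

/-- Moving a connected component whose bounding rectangle is not the whole grid across the
cut does not increase the cut capacity: if `C` is a component of `S'` (resp. of the
complement of `S'`) with non-full bounding rectangle, then `cap (S' \ C) ≤ cap S'`
(resp. `cap (S' ∪ C) ≤ cap S'`). -/
theorem cut_decreases_on_component_move {N ρ : ℕ} (hN : 1 ≤ N) (hρ : 1 ≤ ρ)
    (d : CapacityData N ρ) (S' : Finset (GridV N)) :
    (∀ C : Finset (GridV N), IsComponent S' C → ¬ FullBoundingRect C →
      cutCap d (S' \ C) ≤ cutCap d S') ∧
    (∀ C : Finset (GridV N), IsComponent S'ᶜ C → ¬ FullBoundingRect C →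
      cutCap d (S' ∪ C) ≤ cutCap d S') := by
  constructor
  · intro C hcomp hnf
    obtain ⟨hne, hsub, hclose, hconn⟩ := component_facts hcomp
    have hkey := key_sum_le hN d.a d.a_square C hconn hnf
    have hsd : (S' \ C)ᶜ = S'ᶜ ∪ C := by
      ext v
      simp only [Finset.mem_compl, Finset.mem_sdiff, Finset.mem_union]
      tauto
    have hdisj : Disjoint S'ᶜ C := by
      rw [Finset.disjoint_left]
      intro v hv hvc
      exact (Finset.mem_compl.1 hv) (hsub hvc)
    have hsum_a : ∑ v ∈ (S' \ C)ᶜ, d.a v = ∑ v ∈ S'ᶜ, d.a v + ∑ v ∈ C, d.a v := by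
      rw [hsd, Finset.sum_union hdisj]
    have hsum_b : ∑ v ∈ S' \ C, d.b v + ∑ v ∈ C, d.b v = ∑ v ∈ S', d.b v :=
      Finset.sum_sdiff hsub
    have e1 : (bdp S').filter (fun p => p.1 ∈ C) = bdp C := by
      ext p
      simp only [bdp, Finset.mem_filter, Finset.mem_univ, true_and]
      constructor
      · rintro ⟨⟨h1, h2, h3⟩, h4⟩
        exact ⟨h4, fun hc => h2 (hsub hc), h3⟩
      · rintro ⟨h1, h2, h3⟩
        exact ⟨⟨hsub h1, fun hS => h2 (hclose p.1 h1 p.2 hS h3), h3⟩, h1⟩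
    have e2 : (bdp S').filter (fun p => ¬ p.1 ∈ C) = bdp (S' \ C) := by
      ext p
      simp only [bdp, Finset.mem_filter, Finset.mem_univ, true_and, Finset.mem_sdiff]
      constructor
      · rintro ⟨⟨h1, h2, h3⟩, h4⟩
        exact ⟨⟨h1, h4⟩, fun hm => h2 hm.1, h3⟩
      · rintro ⟨⟨h1, h4⟩, h2, h3⟩
        refine ⟨⟨h1, fun hS => ?_, h3⟩, h4⟩
        by_cases hc : p.2 ∈ C
        · exact h4 (hclose p.2 hc p.1 h1 (adj_symm h3))
        · exact h2 ⟨hS, hc⟩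
    have hsplit := Finset.card_filter_add_card_filter_not
      (s := bdp S') (p := fun p => p.1 ∈ C)
    rw [e1, e2] at hsplit
    have hmul : ρ * (bdp S').card = ρ * (bdp C).card + ρ * (bdp (S' \ C)).card := by
      rw [← hsplit, Nat.mul_add]
    rw [cutCap_eq', cutCap_eq']
    rw [hsum_a, hmul]
    exact arith1' _ _ _ _ _ _ _ hkey hsum_b
  · intro C hcomp hnf
    obtain ⟨hne, hsub, hclose, hconn⟩ := component_facts hcomp
    have hkey := key_sum_le hN d.b d.b_square C hconn hnf
    have hCS : ∀ v ∈ C, v ∉ S' := fun v hv => Finset.mem_compl.1 (hsub hv)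
    have hsd : (S' ∪ C)ᶜ = S'ᶜ \ C := by
      ext v
      simp only [Finset.mem_compl, Finset.mem_sdiff, Finset.mem_union]
      tauto
    have hsum_a : ∑ v ∈ (S' ∪ C)ᶜ, d.a v + ∑ v ∈ C, d.a v = ∑ v ∈ S'ᶜ, d.a v := by
      rw [hsd]; exact Finset.sum_sdiff hsub
    have hdisj : Disjoint S' C := by
      rw [Finset.disjoint_right]
      exact hCS
    have hsum_b : ∑ v ∈ S' ∪ C, d.b v = ∑ v ∈ S', d.b v + ∑ v ∈ C, d.b v :=
      Finset.sum_union hdisj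
    have e2 : (bdp S').filter (fun p => ¬ p.2 ∈ C) = bdp (S' ∪ C) := by
      ext p
      simp only [bdp, Finset.mem_filter, Finset.mem_univ, true_and, Finset.mem_union]
      constructor
      · rintro ⟨⟨h1, h2, h3⟩, h4⟩
        exact ⟨Or.inl h1, fun hm => hm.elim h2 h4, h3⟩
      · rintro ⟨h1, h2, h3⟩
        have hp2S : p.2 ∉ S' := fun h => h2 (Or.inl h)
        have hp2C : p.2 ∉ C := fun h => h2 (Or.inr h)
        rcases h1 with h1 | h1
        · exact ⟨⟨h1, hp2S, h3⟩, hp2C⟩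
        · exact absurd (hclose p.1 h1 p.2 (Finset.mem_compl.2 hp2S) h3) hp2C
    have e1card : ((bdp S').filter (fun p => p.2 ∈ C)).card = (bdp C).card := by
      symm
      apply Finset.card_nbij' (i := Prod.swap) (j := Prod.swap)
      · intro p hp
        simp only [Finset.mem_coe, bdp, Finset.mem_filter, Finset.mem_univ, true_and] at hp ⊢
        obtain ⟨h1, h2, h3⟩ := hp
        have hp2S : p.2 ∈ S' := by
          by_contra hS
          exact h2 (hclose p.1 h1 p.2 (Finset.mem_compl.2 hS) h3)
        exact ⟨⟨hp2S, hCS p.1 h1, adj_symm h3⟩, h1⟩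
      · intro p hp
        simp only [Finset.mem_coe, bdp, Finset.mem_filter, Finset.mem_univ, true_and] at hp ⊢
        obtain ⟨⟨h1, h2, h3⟩, h4⟩ := hp
        exact ⟨h4, fun hc => (hCS p.1 hc) h1, adj_symm h3⟩
      · intro p hp; simp
      · intro p hp; simp
    have hsplit := Finset.card_filter_add_card_filter_not
      (s := bdp S') (p := fun p => p.2 ∈ C)
    rw [e1card, e2] at hsplit
    have hmul : ρ * (bdp S').card = ρ * (bdp C).card + ρ * (bdp (S' ∪ C)).card := by
      rw [← hsplit, Nat.mul_add]
    rw [cutCap_eq', cutCap_eq']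
    rw [hsum_b, hmul]
    exact arith2' _ _ _ _ _ _ _ hkey hsum_a

end MainProof
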